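/- arXiv:1402.2663 — 4 statements merged into one kernel-verified Lean document; each statement's English description precedes it below -/
import Mathlib

section
/- Let G be a connected non-trivial graph and H a non-trivial graph. Let a, b ∈ V(G) be distinct vertices that are not true twins, and let x, y ∈ V(H). Then (a,x) and (b,y) are mutually maximally distant in G∘H if and only if a and b are mutually maximally distant in G. -/
open SimpleGraph

namespace Paper

variable {α β : Type*}

/-- The lexicographic product of two simple graphs. -/
def lexProd (G : SimpleGraph α) (H : SimpleGraph β) : SimpleGraph (α × β) where
  Adj p q := G.Adj p.1 q.1 ∨ (p.1 = q.1 ∧ H.Adj p.2 q.2)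
  symm := by
    constructor
    rintro ⟨a, b⟩ ⟨c, d⟩ (h | ⟨h1, h2⟩)
    · exact Or.inl h.symm
    · exact Or.inr ⟨h1.symm, h2.symm⟩
  loopless := by
    constructor
    rintro ⟨a, b⟩ (h | ⟨h1, h2⟩)
    · exact G.irrefl h
    · exact H.irrefl h2

/-- `u` is maximally distant from `v`. -/
def MaxDistant (G : SimpleGraph α) (u v : α) : Prop :=
  ∀ w, G.Adj u w → G.edist v w ≤ G.edist u v

/-- `u` and `v` are mutually maximally distant. -/
def MMD (G : SimpleGraph α) (u v : α) : Prop :=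
  MaxDistant G u v ∧ MaxDistant G v u

/-- Two vertices are true twins if they have the same closed neighborhood. -/
def TrueTwins (G : SimpleGraph α) (u v : α) : Prop :=
  ∀ w, (G.Adj u w ∨ u = w) ↔ (G.Adj v w ∨ v = w)

/-- The boundary of a graph: vertices belonging to some mutually maximally distant pair. -/
def boundary (G : SimpleGraph α) : Set α := {u | ∃ v, u ≠ v ∧ MMD G u v}

/-- The strong resolving graph of `G`, with vertex set the boundary of `G`. -/
def srGraph (G : SimpleGraph α) : SimpleGraph (boundary G) where
  Adj u v := u.1 ≠ v.1 ∧ MMD G u.1 v.1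
  symm := ⟨fun u v h => ⟨h.1.symm, h.2.2, h.2.1⟩⟩
  loopless := ⟨fun u h => h.1 rfl⟩

/-- The graph `G*`: same vertices, `u ~ v` iff `d_G(u,v) ≥ 2` or `u,v` are true twins. -/
def gstar (G : SimpleGraph α) : SimpleGraph α where
  Adj u v := u ≠ v ∧ (2 ≤ G.edist u v ∨ TrueTwins G u v)
  symm := by
    constructor
    rintro u v ⟨h1, (h2 | h2)⟩
    · exact ⟨h1.symm, Or.inl (by rwa [G.edist_comm] at h2)⟩
    · exact ⟨h1.symm, Or.inr fun w => (h2 w).symm⟩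
  loopless := ⟨fun u h => h.1 rfl⟩

/-- `G*` with its isolated vertices removed. -/
def gstarMinus (G : SimpleGraph α) : SimpleGraph {x | ∃ y, (gstar G).Adj x y} :=
  SimpleGraph.induce _ (gstar G)

/-- Disjoint union of two graphs. -/
def disjUnion (G : SimpleGraph α) (H : SimpleGraph β) : SimpleGraph (α ⊕ β) where
  Adj x y := match x, y with
    | Sum.inl a, Sum.inl b => G.Adj a b
    | Sum.inr a, Sum.inr b => H.Adj a b
    | _, _ => False
  symm := by
    constructor
    rintro (a | a) (b | b) h <;> simp_all <;> exact h.symm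
  loopless := by
    constructor
    rintro (a | a) h <;> simp_all

/-- `k` disjoint copies of a graph. -/
def copies (k : ℕ) (G : SimpleGraph α) : SimpleGraph (Fin k × α) where
  Adj p q := p.1 = q.1 ∧ G.Adj p.2 q.2
  symm := ⟨fun p q h => ⟨h.1.symm, h.2.symm⟩⟩
  loopless := ⟨fun p h => G.irrefl h.2⟩

/-- The join `K₁ + H` of a single vertex with `H`. -/
def joinK1 (H : SimpleGraph β) : SimpleGraph (Unit ⊕ β) where
  Adj x y := match x, y with
    | Sum.inl _, Sum.inl _ => False
    | Sum.inl _, Sum.inr _ => True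
    | Sum.inr _, Sum.inl _ => True
    | Sum.inr a, Sum.inr b => H.Adj a b
  symm := by
    constructor
    rintro (a | a) (b | b) h <;> simp_all <;> exact h.symm
  loopless := by
    constructor
    rintro (a | a) h <;> simp_all

/-- `w` strongly resolves the pair `u, v`. -/
def StronglyResolves (G : SimpleGraph α) (w u v : α) : Prop :=
  G.edist w u = G.edist w v + G.edist v u ∨ G.edist w v = G.edist w u + G.edist u v

/-- A strong metric generator. -/
def IsStrongGenerator (G : SimpleGraph α) (S : Finset α) : Prop :=
  ∀ u v : α, u ≠ v → ∃ w ∈ S, StronglyResolves G w u v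

/-- The strong metric dimension. -/
noncomputable def sdim (G : SimpleGraph α) : ℕ :=
  sInf {k | ∃ S : Finset α, IsStrongGenerator G S ∧ S.card = k}

/-- A vertex cover. -/
def IsVertexCover (G : SimpleGraph α) (S : Finset α) : Prop :=
  ∀ ⦃u v : α⦄, G.Adj u v → u ∈ S ∨ v ∈ S

/-- The vertex cover number `α(G)`. -/
noncomputable def vcNum (G : SimpleGraph α) : ℕ :=
  sInf {k | ∃ S : Finset α, IsVertexCover G S ∧ S.card = k}

/-- The independence number `β(G)`. -/
noncomputable def indepNum (G : SimpleGraph α) : ℕ :=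
  sSup {k | ∃ S : Finset α, (∀ u ∈ S, ∀ v ∈ S, ¬ G.Adj u v) ∧ S.card = k}


section Aux

variable (G : SimpleGraph α) (H : SimpleGraph β)

/-- Projection: any walk in the lexicographic product is at least as long as the
`G`-distance between the first coordinates. -/
lemma edist_le_lex_walk : ∀ {p q : α × β} (w : (lexProd G H).Walk p q),
    G.edist p.1 q.1 ≤ w.length := by
  intro p q w
  induction w with
  | nil => simp [edist_self]
  | @cons u r v h w ih =>
    rw [SimpleGraph.Walk.length_cons]
    rcases h with h | ⟨h1, _⟩
    · calc G.edist u.1 v.1 ≤ G.edist u.1 r.1 + G.edist r.1 v.1 := G.edist_triangle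
        _ ≤ 1 + (w.length : ℕ∞) :=
            add_le_add (le_trans (edist_le h.toWalk) (by simp)) ih
        _ = ((w.length + 1 : ℕ) : ℕ∞) := by push_cast; ring
    · calc G.edist u.1 v.1 = G.edist r.1 v.1 := by rw [h1]
        _ ≤ (w.length : ℕ∞) := ih
        _ ≤ ((w.length + 1 : ℕ) : ℕ∞) := by exact_mod_cast Nat.le_succ _

lemma edist_le_lex_edist (p q : α × β) :
    G.edist p.1 q.1 ≤ (lexProd G H).edist p q := by
  rcases eq_or_ne ((lexProd G H).edist p q) ⊤ with h | h
  · simp [h]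
  · obtain ⟨w, hw⟩ := exists_walk_of_edist_ne_top h
    rw [← hw]
    exact edist_le_lex_walk G H w

/-- The homomorphism `v ↦ (v, y)`. -/
def lexHom (y : β) : G →g lexProd G H where
  toFun v := (v, y)
  map_rel' h := Or.inl h

lemma lex_edist_eq (hG : G.Connected) {a b : α} (hab : a ≠ b) (x y : β) :
    (lexProd G H).edist (a, x) (b, y) = G.edist a b := by
  refine le_antisymm ?_ (edist_le_lex_edist G H (a, x) (b, y))
  obtain ⟨p, hp⟩ := hG.exists_walk_length_eq_edist a b
  cases p with
  | nil => exact absurd rfl hab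
  | @cons _ c _ h q =>
    have e : (lexProd G H).Adj (a, x) (c, y) := Or.inl h
    refine le_trans (edist_le (SimpleGraph.Walk.cons e (q.map (lexHom G H y)))) ?_
    rw [← hp]
    exact Nat.cast_le.mpr (Nat.succ_le_succ (SimpleGraph.Walk.length_map (lexHom G H y) q).le)

lemma lex_edist_same_le_two {a c : α} (hac : G.Adj a c) (x z : β) :
    (lexProd G H).edist (a, x) (a, z) ≤ 2 := by
  have e1 : (lexProd G H).Adj (a, x) (c, z) := Or.inl hac
  have e2 : (lexProd G H).Adj (c, z) (a, z) := Or.inl hac.symm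
  refine le_trans
    (edist_le (SimpleGraph.Walk.cons e1 (SimpleGraph.Walk.cons e2 SimpleGraph.Walk.nil))) ?_
  simp

lemma exists_adj_of_connected (hG : G.Connected) (hGn : Nontrivial α) (a : α) :
    ∃ c, G.Adj a c := by
  obtain ⟨b, hb⟩ := exists_ne a
  obtain ⟨p, -⟩ := hG.exists_walk_length_eq_edist a b
  cases p with
  | nil => exact absurd rfl hb.symm
  | cons h q => exact ⟨_, h⟩

lemma trueTwins_of_mmd_adj {a b : α} (hmmd : MMD G a b) (hadj : G.Adj a b) :
    TrueTwins G a b := by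
  have key : ∀ u v : α, G.Adj u v → MaxDistant G u v → ∀ w, G.Adj u w → G.Adj v w ∨ v = w := by
    intro u v huv hmax w hw
    have h1 : G.edist v w ≤ 1 := by
      have := hmax w hw
      rwa [edist_eq_one_iff_adj.mpr huv] at this
    rcases eq_or_ne (G.edist v w) 1 with h | h
    · exact Or.inl (edist_eq_one_iff_adj.mp h)
    · right
      have : G.edist v w = 0 := ENat.lt_one_iff_eq_zero.mp (lt_of_le_of_ne h1 h)
      exact edist_eq_zero_iff.mp this
  intro w
  constructor
  · rintro (h | rfl)
    · rcases key a b hadj hmmd.1 w h with h' | rfl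
      · exact Or.inl h'
      · exact Or.inr rfl
    · exact Or.inl hadj.symm
  · rintro (h | rfl)
    · rcases key b a hadj.symm hmmd.2 w h with h' | rfl
      · exact Or.inl h'
      · exact Or.inr rfl
    · exact Or.inl hadj

end Aux

theorem stmt_3 (G : SimpleGraph α) (H : SimpleGraph β) (hG : G.Connected)
    (hGn : Nontrivial α) (hHn : Nontrivial β) (a b : α) (hab : a ≠ b)
    (htw : ¬ TrueTwins G a b) (x y : β) :
    MMD (lexProd G H) (a, x) (b, y) ↔ MMD G a b := by
  have hedist : (lexProd G H).edist (a, x) (b, y) = G.edist a b :=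
    lex_edist_eq G H hG hab x y
  have hedist' : (lexProd G H).edist (b, y) (a, x) = G.edist b a :=
    lex_edist_eq G H hG hab.symm y x
  constructor
  · rintro ⟨h1, h2⟩
    constructor
    · intro w hw
      rcases eq_or_ne w b with h | hwb
      · subst h; simp [edist_self]
      · have := h1 (w, y) (Or.inl hw)
        rwa [hedist, lex_edist_eq G H hG hwb.symm] at this
    · intro w hw
      rcases eq_or_ne w a with h | hwa
      · subst h; simp [edist_self]
      · have := h2 (w, x) (Or.inl hw)
        rwa [hedist', lex_edist_eq G H hG hwa.symm] at this
  · rintro ⟨h1, h2⟩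
    have hnadj : ¬ G.Adj a b := fun h => htw (trueTwins_of_mmd_adj G ⟨h1, h2⟩ h)
    have h2le : 2 ≤ G.edist a b := by
      have h0 : G.edist a b ≠ 0 := edist_eq_zero_iff.ne.mpr hab
      have hone : G.edist a b ≠ 1 := fun h => hnadj (edist_eq_one_iff_adj.mp h)
      have hlt : (1 : ℕ∞) < G.edist a b :=
        lt_of_le_of_ne (Order.one_le_iff_pos.mpr (pos_iff_ne_zero.mpr h0)) (Ne.symm hone)
      exact (ENat.add_one_le_iff (by norm_num)).mpr hlt
    constructor
    · rintro ⟨w, z⟩ hw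
      rw [hedist]
      rcases hw with hw | ⟨hw1, hw2⟩
      · rcases eq_or_ne w b with h | hwb
        · rw [h]
          obtain ⟨c, hc⟩ := exists_adj_of_connected G hG hGn b
          exact le_trans (lex_edist_same_le_two G H hc y z) h2le
        · rw [lex_edist_eq G H hG hwb.symm]
          exact h1 w hw
      · simp only at hw1
        subst hw1
        rw [lex_edist_eq G H hG hab.symm]
        exact le_of_eq (G.edist_comm ▸ rfl)
    · rintro ⟨w, z⟩ hw
      rw [hedist']
      rcases hw with hw | ⟨hw1, hw2⟩
      · rcases eq_or_ne w a with h | hwa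
        · rw [h]
          obtain ⟨c, hc⟩ := exists_adj_of_connected G hG hGn a
          calc (lexProd G H).edist (a, x) (a, z) ≤ 2 := lex_edist_same_le_two G H hc x z
            _ ≤ G.edist a b := h2le
            _ = G.edist b a := G.edist_comm
        · rw [lex_edist_eq G H hG hwa.symm]
          exact h2 w hw
      · simp only at hw1
        subst hw1
        rw [lex_edist_eq G H hG hab]
        exact le_of_eq (G.edist_comm ▸ rfl)

end Paper
end

section
/- Let G be a connected non-trivial graph, H a graph of order n' ≥ 2, and let a, b ∈ V(G) be two distinct true twin vertices of G, and x, y ∈ V(H). Then (a,x) and (b,y) are mutually maximally distant in G∘H if and only if both x and y have degree n'−1 in H. -/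
open SimpleGraph

namespace Paper

variable {α β : Type*}

lemma edist_le_one_cases {α : Type*} (G : SimpleGraph α) (u v : α) (h : G.edist u v ≤ 1) :
    u = v ∨ G.Adj u v := by
  rcases h.lt_or_eq with h | h
  · exact Or.inl (edist_eq_zero_iff.mp (ENat.lt_one_iff_eq_zero.mp h))
  · exact Or.inr (edist_eq_one_iff_adj.mp h)

lemma degree_full_iff {β : Type*} [Fintype β] (H : SimpleGraph β) [DecidableRel H.Adj] (x : β) :
    H.degree x = Fintype.card β - 1 ↔ ∀ d, d ≠ x → H.Adj x d := by
  classical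
  rw [degree]
  constructor
  · intro h d hd
    have hsub : H.neighborFinset x ⊆ Finset.univ.erase x := by
      intro z hz
      rw [mem_neighborFinset] at hz
      exact Finset.mem_erase.mpr ⟨(H.ne_of_adj hz).symm, Finset.mem_univ _⟩
    have heq : H.neighborFinset x = Finset.univ.erase x :=
      Finset.eq_of_subset_of_card_le hsub
        (by rw [h, Finset.card_erase_of_mem (Finset.mem_univ x), Finset.card_univ])
    have : d ∈ H.neighborFinset x := by rw [heq]; exact Finset.mem_erase.mpr ⟨hd, Finset.mem_univ _⟩
    simpa using this
  · intro h
    have heq : H.neighborFinset x = Finset.univ.erase x := by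
      ext z
      rw [mem_neighborFinset, Finset.mem_erase]
      exact ⟨fun hz => ⟨(H.ne_of_adj hz).symm, Finset.mem_univ _⟩, fun hz => h z hz.1⟩
    rw [heq, Finset.card_erase_of_mem (Finset.mem_univ x), Finset.card_univ]

lemma maxDistant_lex_iff (G : SimpleGraph α) (H : SimpleGraph β)
    (a b : α) (hab : a ≠ b) (htw : TrueTwins G a b) (x y : β) :
    MaxDistant (lexProd G H) (a, x) (b, y) ↔ ∀ d, d ≠ y → H.Adj y d := by
  have hGab : G.Adj a b := by
    rcases (htw a).mp (Or.inr rfl) with h | h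
    · exact h.symm
    · exact absurd h.symm hab
  have hd1 : (lexProd G H).edist (a, x) (b, y) = 1 :=
    edist_eq_one_iff_adj.mpr (Or.inl hGab)
  constructor
  · intro hmd d hd
    have hadj : (lexProd G H).Adj (a, x) (b, d) := Or.inl hGab
    have := hmd (b, d) hadj
    rw [hd1] at this
    rcases edist_le_one_cases _ _ _ this with h | h
    · exact absurd (congrArg Prod.snd h).symm hd
    · rcases h with h | ⟨_, h⟩
      · exact (G.irrefl h).elim
      · exact h
  · intro hfull w hadj
    rw [hd1]
    obtain ⟨c, d⟩ := w
    rcases hadj with h | ⟨h1, h2⟩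
    · by_cases hcb : c = b
      · subst hcb
        by_cases hdy : d = y
        · subst hdy; simp
        · exact le_of_eq (edist_eq_one_iff_adj.mpr (Or.inr ⟨rfl, hfull d hdy⟩))
      · have : G.Adj b c := by
          rcases (htw c).mp (Or.inl h) with h' | h'
          · exact h'
          · exact absurd h'.symm hcb
        exact le_of_eq (edist_eq_one_iff_adj.mpr (Or.inl this))
    · subst h1
      exact le_of_eq (edist_eq_one_iff_adj.mpr (Or.inl hGab.symm))

theorem stmt_4 [Fintype β] (G : SimpleGraph α) (H : SimpleGraph β) [DecidableRel H.Adj]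
    (hG : G.Connected) (hGn : Nontrivial α) (hn' : 2 ≤ Fintype.card β)
    (a b : α) (hab : a ≠ b) (htw : TrueTwins G a b) (x y : β) :
    MMD (lexProd G H) (a, x) (b, y) ↔
      (H.degree x = Fintype.card β - 1 ∧ H.degree y = Fintype.card β - 1) := by
  rw [MMD, maxDistant_lex_iff G H a b hab htw x y,
    maxDistant_lex_iff G H b a hab.symm (fun w => (htw w).symm) y x,
    degree_full_iff, degree_full_iff]
  tauto

end Paper
end

section
/- Let G be a connected graph of diameter at most 2. Then G*_−, the graph obtained from G* by removing isolated vertices, is isomorphic to G_SR. -/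
open SimpleGraph

namespace Paper

variable {α β : Type*}

lemma edist_le_one_iff {G : SimpleGraph α} {u v : α} :
    G.edist u v ≤ 1 ↔ u = v ∨ G.Adj u v := by
  constructor
  · intro h
    rcases eq_or_ne (G.edist u v) 0 with h0 | h0
    · exact Or.inl (edist_eq_zero_iff.mp h0)
    · exact Or.inr (edist_eq_one_iff_adj.mp (le_antisymm h (Order.one_le_iff_pos.mpr (pos_iff_ne_zero.mpr h0))))
  · rintro (rfl | h)
    · simp
    · exact le_of_eq (edist_eq_one_iff_adj.mpr h)

lemma key (G : SimpleGraph α) (hG : G.Connected) (hdiam : G.ediam ≤ 2)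
    {u v : α} (huv : u ≠ v) :
    (2 ≤ G.edist u v ∨ TrueTwins G u v) ↔ MMD G u v := by
  have hle : ∀ a b : α, G.edist a b ≤ 2 := fun a b => edist_le_ediam.trans hdiam
  constructor
  · rintro (h2 | htw)
    · exact ⟨fun w _ => (hle v w).trans h2,
        fun w _ => (hle u w).trans (by rwa [G.edist_comm] at h2)⟩
    · have hadj : G.Adj u v := by
        rcases (htw u).mp (Or.inr rfl) with h | h
        · exact h.symm
        · exact absurd h.symm huv
      have h1 : G.edist u v = 1 := edist_eq_one_iff_adj.mpr hadj
      have h1' : G.edist v u = 1 := edist_eq_one_iff_adj.mpr hadj.symm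
      constructor
      · intro w hw
        rcases (htw w).mp (Or.inl hw) with h | h
        · rw [h1]; exact edist_le_one_iff.mpr (Or.inr h)
        · rw [h1]; exact edist_le_one_iff.mpr (Or.inl h)
      · intro w hw
        rcases (htw w).mpr (Or.inl hw) with h | h
        · rw [h1']; exact edist_le_one_iff.mpr (Or.inr h)
        · rw [h1']; exact edist_le_one_iff.mpr (Or.inl h)
  · intro hmmd
    rcases le_or_gt 2 (G.edist u v) with h2 | h2
    · exact Or.inl h2
    · have hne : G.edist u v ≠ ⊤ := edist_ne_top_iff_reachable.mpr (hG.preconnected u v)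
      have h1 : G.edist u v = 1 := by
        have hpos : 1 ≤ G.edist u v :=
          Order.one_le_iff_pos.mpr (pos_iff_ne_zero.mpr ((G.edist_eq_zero_iff (u := u) (v := v)).ne.mpr huv))
        exact le_antisymm (by simpa using h2) hpos
      have hadj : G.Adj u v := edist_eq_one_iff_adj.mp h1
      refine Or.inr fun w => ⟨?_, ?_⟩
      · rintro (h | rfl)
        · have := hmmd.1 w h
          rw [h1] at this
          rcases edist_le_one_iff.mp this with h' | h'
          · exact Or.inr h'
          · exact Or.inl h'
        · exact Or.inl hadj.symm
      · rintro (h | rfl)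
        · have := hmmd.2 w h
          have h1'' : G.edist v u = 1 := by rw [G.edist_comm]; exact h1
          rw [h1''] at this
          rcases edist_le_one_iff.mp this with h' | h'
          · exact Or.inr h'
          · exact Or.inl h'
        · exact Or.inl hadj

theorem stmt_12 (G : SimpleGraph α) (hG : G.Connected) (hdiam : G.ediam ≤ 2) :
    Nonempty (gstarMinus G ≃g srGraph G) := by
  have heq : {x | ∃ y, (gstar G).Adj x y} = boundary G := by
    ext x
    constructor
    · rintro ⟨y, hne, h⟩
      exact ⟨y, hne, (key G hG hdiam hne).mp h⟩
    · rintro ⟨y, hne, h⟩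
      exact ⟨y, hne, (key G hG hdiam hne).mpr h⟩
  refine ⟨{ toEquiv := Equiv.setCongr heq, map_rel_iff' := ?_ }⟩
  rintro ⟨a, ha⟩ ⟨b, hb⟩
  show (srGraph G).Adj _ _ ↔ (gstarMinus G).Adj _ _
  constructor
  · rintro ⟨hne, h⟩
    exact ⟨hne, (key G hG hdiam hne).mpr h⟩
  · rintro ⟨hne, h⟩
    exact ⟨hne, (key G hG hdiam hne).mp h⟩

end Paper
end

section
/- Let n ≥ 2 and let H be a graph of order n' ≥ 2 with maximum degree Δ(H) ≤ n'−2. Then the strong resolving graph of K_n∘H is isomorphic to n disjoint copies of H*; consequently dim_s(K_n∘H) = n·dim_s(H) if D(H) = 2, and dim_s(K_n∘H) = n·dim_s(K₁+H) if D(H) > 2. -/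
open SimpleGraph

namespace Paper

variable {α β : Type*}

/-! ### Auxiliary lemmas -/

section Aux

lemma enat_two_le {e : ℕ∞} (h0 : e ≠ 0) (h1 : e ≠ 1) : 2 ≤ e := by
  cases e with
  | top => exact le_top
  | coe m =>
    have h0' : m ≠ 0 := by simpa using h0
    have h1' : m ≠ 1 := by simpa using h1
    exact_mod_cast by omega

lemma enat_one_or_two {e : ℕ∞} (h2 : e ≤ 2) (h0 : e ≠ 0) : e = 1 ∨ e = 2 := by
  cases e with
  | top => simp at h2
  | coe m =>
    have hm2 : m ≤ 2 := by exact_mod_cast h2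
    have hm0 : m ≠ 0 := by simpa using h0
    interval_cases m <;> simp_all

lemma enat_le_one {e : ℕ∞} (h : e ≤ 1) : e = 0 ∨ e = 1 := by
  cases e with
  | top => simp at h
  | coe m =>
    rcases Nat.le_one_iff_eq_zero_or_eq_one.mp (by exact_mod_cast h) with h | h <;> simp [h]

lemma two_le_edist_iff {G : SimpleGraph α} {u v : α} :
    2 ≤ G.edist u v ↔ u ≠ v ∧ ¬ G.Adj u v := by
  constructor
  · intro h
    constructor
    · rintro rfl
      rw [SimpleGraph.edist_self] at h
      norm_num at h
    · intro ha
      rw [← SimpleGraph.edist_eq_one_iff_adj] at ha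
      rw [ha] at h
      norm_num at h
  · rintro ⟨h1, h2⟩
    refine enat_two_le ?_ ?_
    · exact fun h => h1 (SimpleGraph.edist_eq_zero_iff.mp h)
    · exact fun h => h2 (SimpleGraph.edist_eq_one_iff_adj.mp h)

/-- `w = u` strongly resolves `u, v`. -/
lemma stronglyResolves_left (G : SimpleGraph α) (u v : α) : StronglyResolves G u u v := by
  right
  rw [SimpleGraph.edist_self, zero_add]

/-- `w = v` strongly resolves `u, v`. -/
lemma stronglyResolves_right (G : SimpleGraph α) (u v : α) : StronglyResolves G v u v := by
  left
  rw [SimpleGraph.edist_self, zero_add]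

end Aux

section Diam2

variable {G : SimpleGraph α}

/-- In a graph where all distinct vertices are at distance at most 2, the distance between
distinct vertices is 1 or 2. -/
lemma edist_one_or_two (h2 : ∀ u v : α, u ≠ v → G.edist u v ≤ 2) {u v : α} (huv : u ≠ v) :
    G.edist u v = 1 ∨ G.edist u v = 2 :=
  enat_one_or_two (h2 u v huv) (fun h => huv (SimpleGraph.edist_eq_zero_iff.mp h))

lemma edist_eq_two (h2 : ∀ u v : α, u ≠ v → G.edist u v ≤ 2) {u v : α} (huv : u ≠ v)
    (hna : ¬ G.Adj u v) : G.edist u v = 2 :=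
  le_antisymm (h2 u v huv) (two_le_edist_iff.mpr ⟨huv, hna⟩)

lemma maxDistant_iff (h2 : ∀ u v : α, u ≠ v → G.edist u v ≤ 2) {u v : α} (huv : u ≠ v) :
    MaxDistant G u v ↔ (¬ G.Adj u v ∨ ∀ w, G.Adj u w → (G.Adj v w ∨ v = w)) := by
  rcases edist_one_or_two h2 huv with hd | hd
  · have hadj : G.Adj u v := SimpleGraph.edist_eq_one_iff_adj.mp hd
    constructor
    · intro h
      right
      intro w hw
      have hle := h w hw
      rw [hd] at hle
      rcases edist_le_one_iff.mp hle with h' | h'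
      · exact Or.inr h'
      · exact Or.inl h'
    · rintro (h | h)
      · exact absurd hadj h
      · intro w hw
        rw [hd]
        rcases h w hw with h' | h'
        · exact edist_le_one_iff.mpr (Or.inr h')
        · exact edist_le_one_iff.mpr (Or.inl h')
  · have hna : ¬ G.Adj u v := by
      intro h
      rw [SimpleGraph.edist_eq_one_iff_adj.mpr h] at hd
      norm_num at hd
    constructor
    · intro _; exact Or.inl hna
    · intro _ w hw
      rw [hd]
      by_cases hvw : v = w
      · subst hvw; simp [SimpleGraph.edist_self]
      · exact h2 v w hvw

lemma mmd_iff (h2 : ∀ u v : α, u ≠ v → G.edist u v ≤ 2) {u v : α} (huv : u ≠ v) :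
    MMD G u v ↔ (¬ G.Adj u v ∨ TrueTwins G u v) := by
  rw [MMD, maxDistant_iff h2 huv, maxDistant_iff h2 huv.symm]
  by_cases hadj : G.Adj u v
  · have hadj' : G.Adj v u := hadj.symm
    simp only [hadj, hadj', not_true_eq_false, false_or]
    constructor
    · rintro ⟨hA, hB⟩ w
      constructor
      · rintro (h | rfl)
        · exact hA w h
        · exact Or.inl hadj'
      · rintro (h | rfl)
        · exact hB w h
        · exact Or.inl hadj
    · intro htt
      constructor
      · exact fun w hw => (htt w).mp (Or.inl hw)
      · exact fun w hw => (htt w).mpr (Or.inl hw)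
  · have hadj' : ¬ G.Adj v u := fun h => hadj h.symm
    simp [hadj, hadj']

lemma mmd_iff_gstar_adj (h2 : ∀ u v : α, u ≠ v → G.edist u v ≤ 2) {u v : α} (huv : u ≠ v) :
    MMD G u v ↔ (gstar G).Adj u v := by
  rw [mmd_iff h2 huv]
  show _ ↔ u ≠ v ∧ (2 ≤ G.edist u v ∨ TrueTwins G u v)
  rw [two_le_edist_iff]
  constructor
  · rintro (h | h)
    · exact ⟨huv, Or.inl ⟨huv, h⟩⟩
    · exact ⟨huv, Or.inr h⟩
  · rintro ⟨-, (⟨-, h⟩ | h)⟩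
    · exact Or.inl h
    · exact Or.inr h

/-- In a diameter-2 graph, strong generators are precisely vertex covers of `G*`. -/
lemma isStrongGenerator_iff_vc (h2 : ∀ u v : α, u ≠ v → G.edist u v ≤ 2) {S : Finset α} :
    IsStrongGenerator G S ↔ IsVertexCover (gstar G) S := by
  constructor
  · intro hsg u v hadj
    obtain ⟨huv, hor⟩ := hadj
    obtain ⟨w, hwS, hres⟩ := hsg u v huv
    by_cases hwu : w = u
    · exact Or.inl (hwu ▸ hwS)
    by_cases hwv : w = v
    · exact Or.inr (hwv ▸ hwS)
    exfalso
    unfold StronglyResolves at hres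
    rw [show G.edist v u = G.edist u v from SimpleGraph.edist_comm] at hres
    have ha := edist_one_or_two h2 hwu
    have hb := edist_one_or_two h2 hwv
    have hc := edist_one_or_two h2 huv
    have htt : TrueTwins G u v := by
      rcases hor with hor | hor
      · rw [two_le_edist_iff] at hor
        rw [edist_eq_two h2 huv hor.2] at hres
        rcases ha with ha | ha <;> rcases hb with hb | hb <;>
          rw [ha, hb] at hres <;> norm_num at hres
      · exact hor
    rcases ha with ha | ha <;> rcases hb with hb | hb <;> rcases hc with hc | hc <;>
      rw [ha, hb, hc] at hres <;>
      [norm_num at hres; norm_num at hres; skip; norm_num at hres;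
        skip; norm_num at hres; norm_num at hres; norm_num at hres]
    · -- a = 1, b = 2, c = 1 : Adj w u, ¬ Adj w v, Adj u v
      have hwu' : G.Adj w u := SimpleGraph.edist_eq_one_iff_adj.mp ha
      have hwv' : ¬ G.Adj w v := by
        intro h
        rw [SimpleGraph.edist_eq_one_iff_adj.mpr h] at hb
        norm_num at hb
      rcases (htt w).mp (Or.inl hwu'.symm) with h | h
      · exact hwv' h.symm
      · exact hwv h.symm
    · -- a = 2, b = 1, c = 1 : Adj w v, ¬ Adj w u
      have hwv' : G.Adj w v := SimpleGraph.edist_eq_one_iff_adj.mp hb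
      have hwu' : ¬ G.Adj w u := by
        intro h
        rw [SimpleGraph.edist_eq_one_iff_adj.mpr h] at ha
        norm_num at ha
      rcases (htt w).mpr (Or.inl hwv'.symm) with h | h
      · exact hwu' h.symm
      · exact hwu h.symm
  · intro hvc u v huv
    by_cases hadj : G.Adj u v
    · by_cases htt : TrueTwins G u v
      · rcases hvc (show (gstar G).Adj u v from ⟨huv, Or.inr htt⟩) with h | h
        · exact ⟨u, h, stronglyResolves_left G u v⟩
        · exact ⟨v, h, stronglyResolves_right G u v⟩
      · unfold TrueTwins at htt
        push_neg at htt
        obtain ⟨w, hw⟩ := htt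
        rcases hw with ⟨hu, hv1, hv2⟩ | ⟨⟨hu1, hu2⟩, hv⟩
        · have huw : G.Adj u w := by
            rcases hu with hu | rfl
            · exact hu
            · exact absurd hadj.symm hv1
          have hvw : v ≠ w := hv2
          rcases hvc (show (gstar G).Adj v w from
              ⟨hvw, Or.inl (two_le_edist_iff.mpr ⟨hvw, hv1⟩)⟩) with h | h
          · exact ⟨v, h, stronglyResolves_right G u v⟩
          · refine ⟨w, h, Or.inr ?_⟩
            rw [show G.edist w v = 2 from edist_eq_two h2 (fun e => hvw e.symm)
                (fun a => hv1 a.symm),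
              show G.edist w u = 1 from SimpleGraph.edist_eq_one_iff_adj.mpr huw.symm,
              show G.edist u v = 1 from SimpleGraph.edist_eq_one_iff_adj.mpr hadj]
            norm_num
        · have hvw : G.Adj v w := by
            rcases hv with hv | rfl
            · exact hv
            · exact absurd hadj hu1
          have huw : u ≠ w := hu2
          rcases hvc (show (gstar G).Adj u w from
              ⟨huw, Or.inl (two_le_edist_iff.mpr ⟨huw, hu1⟩)⟩) with h | h
          · exact ⟨u, h, stronglyResolves_left G u v⟩
          · refine ⟨w, h, Or.inl ?_⟩
            rw [show G.edist w u = 2 from edist_eq_two h2 (fun e => huw e.symm)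
                (fun a => hu1 a.symm),
              show G.edist w v = 1 from SimpleGraph.edist_eq_one_iff_adj.mpr hvw.symm,
              show G.edist v u = 1 from SimpleGraph.edist_eq_one_iff_adj.mpr hadj.symm]
            norm_num
    · rcases hvc (show (gstar G).Adj u v from
          ⟨huv, Or.inl (two_le_edist_iff.mpr ⟨huv, hadj⟩)⟩) with h | h
      · exact ⟨u, h, stronglyResolves_left G u v⟩
      · exact ⟨v, h, stronglyResolves_right G u v⟩

lemma sdim_eq_vcNum_gstar (h2 : ∀ u v : α, u ≠ v → G.edist u v ≤ 2) :
    sdim G = vcNum (gstar G) := by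
  unfold sdim vcNum
  congr 1
  ext k
  simp only [Set.mem_setOf_eq]
  constructor <;> rintro ⟨S, hS, rfl⟩
  · exact ⟨S, (isStrongGenerator_iff_vc h2).mp hS, rfl⟩
  · exact ⟨S, (isStrongGenerator_iff_vc h2).mpr hS, rfl⟩

end Diam2


section VC

lemma vcNum_le {G : SimpleGraph α} {S : Finset α} (h : IsVertexCover G S) :
    vcNum G ≤ S.card :=
  Nat.sInf_le ⟨S, h, rfl⟩

lemma exists_vc [Fintype α] (G : SimpleGraph α) :
    ∃ S : Finset α, IsVertexCover G S ∧ S.card = vcNum G := by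
  have hne : {k | ∃ S : Finset α, IsVertexCover G S ∧ S.card = k}.Nonempty :=
    ⟨_, Finset.univ, fun u v _ => Or.inl (Finset.mem_univ u), rfl⟩
  exact Nat.sInf_mem hne

lemma vcNum_copies [Fintype β] (n : ℕ) (K : SimpleGraph β) :
    vcNum (copies n K) = n * vcNum K := by
  classical
  apply le_antisymm
  · obtain ⟨S, hS, hcard⟩ := exists_vc K
    have hvc : IsVertexCover (copies n K) ((Finset.univ : Finset (Fin n)) ×ˢ S) := by
      rintro p q ⟨h1, h2⟩
      rcases hS h2 with h | h
      · exact Or.inl (Finset.mem_product.mpr ⟨Finset.mem_univ _, h⟩)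
      · exact Or.inr (Finset.mem_product.mpr ⟨Finset.mem_univ _, h⟩)
    calc vcNum (copies n K) ≤ ((Finset.univ : Finset (Fin n)) ×ˢ S).card := vcNum_le hvc
      _ = n * vcNum K := by
          rw [Finset.card_product, Finset.card_univ, Fintype.card_fin, hcard]
  · obtain ⟨T, hT, hcard⟩ := exists_vc (copies n K)
    rw [← hcard]
    have key : ∀ i : Fin n, vcNum K ≤ (T.filter (fun p => p.1 = i)).card := by
      intro i
      have hvc : IsVertexCover K ((T.filter (fun p => p.1 = i)).image Prod.snd) := by
        intro u v h
        rcases hT (show (copies n K).Adj (i, u) (i, v) from ⟨rfl, h⟩) with h' | h'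
        · exact Or.inl (Finset.mem_image.mpr ⟨(i, u), Finset.mem_filter.mpr ⟨h', rfl⟩, rfl⟩)
        · exact Or.inr (Finset.mem_image.mpr ⟨(i, v), Finset.mem_filter.mpr ⟨h', rfl⟩, rfl⟩)
      exact (vcNum_le hvc).trans Finset.card_image_le
    calc n * vcNum K = ∑ _i : Fin n, vcNum K := by
          rw [Finset.sum_const, Finset.card_univ, Fintype.card_fin, smul_eq_mul]
      _ ≤ ∑ i : Fin n, (T.filter (fun p => p.1 = i)).card :=
          Finset.sum_le_sum fun i _ => key i
      _ = T.card :=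
          (Finset.card_eq_sum_card_fiberwise fun p _ => Finset.mem_univ p.1).symm

end VC

section Lex

variable {n : ℕ} {H : SimpleGraph β}

lemma lexProd_adj {G' : SimpleGraph α} {p q : α × β} :
    (lexProd G' H).Adj p q ↔ G'.Adj p.1 q.1 ∨ (p.1 = q.1 ∧ H.Adj p.2 q.2) := Iff.rfl

lemma lexTop_adj {p q : Fin n × β} :
    (lexProd (⊤ : SimpleGraph (Fin n)) H).Adj p q ↔
      p.1 ≠ q.1 ∨ (p.1 = q.1 ∧ H.Adj p.2 q.2) := by
  rw [lexProd_adj, SimpleGraph.top_adj]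

lemma lexTop_edist_le_two (hn : 2 ≤ n) [Nonempty β] :
    ∀ p q : Fin n × β, p ≠ q → (lexProd (⊤ : SimpleGraph (Fin n)) H).edist p q ≤ 2 := by
  intro p q hpq
  by_cases hadj : (lexProd (⊤ : SimpleGraph (Fin n)) H).Adj p q
  · rw [SimpleGraph.edist_eq_one_iff_adj.mpr hadj]
    norm_num
  · have h1 : p.1 = q.1 := by
      by_contra h
      exact hadj (lexTop_adj.mpr (Or.inl h))
    have : 1 < Fintype.card (Fin n) := by rwa [Fintype.card_fin]
    obtain ⟨j, hj⟩ := Fintype.exists_ne_of_one_lt_card this p.1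
    obtain ⟨b⟩ := ‹Nonempty β›
    have ha1 : (lexProd (⊤ : SimpleGraph (Fin n)) H).Adj p (j, b) :=
      lexTop_adj.mpr (Or.inl (Ne.symm hj))
    have ha2 : (lexProd (⊤ : SimpleGraph (Fin n)) H).Adj (j, b) q :=
      lexTop_adj.mpr (Or.inl (h1 ▸ hj))
    have hw := SimpleGraph.edist_le (SimpleGraph.Walk.cons ha1 (SimpleGraph.Walk.cons ha2
      SimpleGraph.Walk.nil))
    simpa using hw

lemma exists_nonadj [Fintype β] [DecidableRel H.Adj] (hn' : 2 ≤ Fintype.card β)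
    (hdeg : ∀ v, H.degree v ≤ Fintype.card β - 2) (v : β) :
    ∃ w, w ≠ v ∧ ¬ H.Adj v w := by
  classical
  by_contra h
  push_neg at h
  have hsub : Finset.univ.erase v ⊆ H.neighborFinset v := by
    intro w hw
    rw [SimpleGraph.mem_neighborFinset]
    exact h w (Finset.ne_of_mem_erase hw)
  have hle := Finset.card_le_card hsub
  rw [Finset.card_erase_of_mem (Finset.mem_univ v), Finset.card_univ] at hle
  have hdv := hdeg v
  rw [SimpleGraph.degree] at hdv
  omega

lemma lexTop_tt_same {i : Fin n} {u v : β} :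
    TrueTwins (lexProd (⊤ : SimpleGraph (Fin n)) H) (i, u) (i, v) ↔ TrueTwins H u v := by
  constructor
  · intro h w
    have := h (i, w)
    simpa [lexTop_adj, Prod.ext_iff] using this
  · intro h ⟨j, w⟩
    by_cases hji : i = j
    · subst hji
      simpa [lexTop_adj, Prod.ext_iff] using h w
    · constructor <;> intro _ <;> exact Or.inl (lexTop_adj.mpr (Or.inl hji))

lemma lexTop_tt_cross [Fintype β] [DecidableRel H.Adj] (hn' : 2 ≤ Fintype.card β)
    (hdeg : ∀ v, H.degree v ≤ Fintype.card β - 2) {i j : Fin n} {u v : β} (hij : i ≠ j) :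
    ¬ TrueTwins (lexProd (⊤ : SimpleGraph (Fin n)) H) (i, u) (j, v) := by
  intro h
  obtain ⟨w, hw, hna⟩ := exists_nonadj hn' hdeg v
  have := (h (j, w)).mp (Or.inl (lexTop_adj.mpr (Or.inl hij)))
  rcases this with h' | h'
  · rcases lexTop_adj.mp h' with h'' | h''
    · exact h'' rfl
    · exact hna h''.2
  · exact hw (congrArg Prod.snd h').symm

lemma gstar_lexTop [Fintype β] [DecidableRel H.Adj] (hn : 2 ≤ n) (hn' : 2 ≤ Fintype.card β)
    (hdeg : ∀ v, H.degree v ≤ Fintype.card β - 2) :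
    gstar (lexProd (⊤ : SimpleGraph (Fin n)) H) = copies n (gstar H) := by
  have : Nonempty β := Fintype.card_pos_iff.mp (by omega)
  have h2 := lexTop_edist_le_two (H := H) hn
  ext ⟨i, u⟩ ⟨j, v⟩
  show ((i, u) ≠ (j, v) ∧ (2 ≤ _ ∨ _)) ↔ (i = j ∧ (u ≠ v ∧ (2 ≤ H.edist u v ∨ TrueTwins H u v)))
  rw [two_le_edist_iff, two_le_edist_iff]
  by_cases hij : i = j
  · subst hij
    constructor
    · rintro ⟨hne, h | h⟩
      · have huv : u ≠ v := fun e => hne (by rw [e])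
        refine ⟨rfl, huv, Or.inl ⟨huv, ?_⟩⟩
        intro ha
        exact h.2 (lexTop_adj.mpr (Or.inr ⟨rfl, ha⟩))
      · have huv : u ≠ v := fun e => hne (by rw [e])
        exact ⟨rfl, huv, Or.inr (lexTop_tt_same.mp h)⟩
    · rintro ⟨-, huv, h | h⟩
      · have hne : (i, u) ≠ (i, v) := fun e => huv (congrArg Prod.snd e)
        refine ⟨hne, Or.inl ⟨hne, ?_⟩⟩
        intro ha
        rcases lexTop_adj.mp ha with h' | h'
        · exact h' rfl
        · exact h.2 h'.2
      · have hne : (i, u) ≠ (i, v) := fun e => huv (congrArg Prod.snd e)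
        exact ⟨hne, Or.inr (lexTop_tt_same.mpr h)⟩
  · constructor
    · rintro ⟨hne, h | h⟩
      · exact absurd (lexTop_adj.mpr (Or.inl hij)) h.2
      · exact absurd h (lexTop_tt_cross hn' hdeg hij)
    · rintro ⟨h, -⟩
      exact absurd h hij

lemma boundary_lexTop [Fintype β] [DecidableRel H.Adj] (hn : 2 ≤ n) (hn' : 2 ≤ Fintype.card β)
    (hdeg : ∀ v, H.degree v ≤ Fintype.card β - 2) (p : Fin n × β) :
    p ∈ boundary (lexProd (⊤ : SimpleGraph (Fin n)) H) := by
  have : Nonempty β := Fintype.card_pos_iff.mp (by omega)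
  have h2 := lexTop_edist_le_two (H := H) hn
  obtain ⟨w, hw, hna⟩ := exists_nonadj hn' hdeg p.2
  refine ⟨(p.1, w), fun e => hw (congrArg Prod.snd e).symm, ?_⟩
  have hne : p ≠ (p.1, w) := fun e => hw (congrArg Prod.snd e).symm
  rw [mmd_iff h2 hne]
  left
  intro ha
  rcases lexTop_adj.mp ha with h' | h'
  · exact h' rfl
  · exact hna h'.2

end Lex

section Join

variable {H : SimpleGraph β}

lemma joinK1_adj_inl_inr {u : Unit} {v : β} : (joinK1 H).Adj (Sum.inl u) (Sum.inr v) :=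
  trivial

lemma joinK1_adj_inr_inr {u v : β} :
    (joinK1 H).Adj (Sum.inr u) (Sum.inr v) ↔ H.Adj u v := Iff.rfl

lemma joinK1_edist_le_two :
    ∀ p q : Unit ⊕ β, p ≠ q → (joinK1 H).edist p q ≤ 2 := by
  rintro (x | u) (y | v) hpq
  · exact absurd rfl hpq
  · rw [SimpleGraph.edist_eq_one_iff_adj.mpr joinK1_adj_inl_inr]
    norm_num
  · rw [SimpleGraph.edist_eq_one_iff_adj.mpr joinK1_adj_inl_inr.symm]
    norm_num
  · have ha1 : (joinK1 H).Adj (Sum.inr u) (Sum.inl ()) := joinK1_adj_inl_inr.symm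
    have ha2 : (joinK1 H).Adj (Sum.inl ()) (Sum.inr v) := joinK1_adj_inl_inr
    have hw := SimpleGraph.edist_le (SimpleGraph.Walk.cons ha1 (SimpleGraph.Walk.cons ha2
      SimpleGraph.Walk.nil))
    simpa using hw

lemma gstar_joinK1_not_adj_inl [Fintype β] [DecidableRel H.Adj] (hn' : 2 ≤ Fintype.card β)
    (hdeg : ∀ v, H.degree v ≤ Fintype.card β - 2) (x : Unit) (y : Unit ⊕ β) :
    ¬ (gstar (joinK1 H)).Adj (Sum.inl x) y := by
  rintro ⟨hne, h | h⟩
  · rcases y with y | v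
    · exact hne (by rfl)
    · rw [two_le_edist_iff] at h
      exact h.2 joinK1_adj_inl_inr
  · rcases y with y | v
    · exact hne (by rfl)
    · obtain ⟨w, hw, hna⟩ := exists_nonadj hn' hdeg v
      have := (h (Sum.inr w)).mp (Or.inl joinK1_adj_inl_inr)
      rcases this with h' | h'
      · exact hna h'
      · exact hw (by injection h' with h''; exact h''.symm)

lemma gstar_joinK1_adj_inr {u v : β} :
    (gstar (joinK1 H)).Adj (Sum.inr u) (Sum.inr v) ↔ (gstar H).Adj u v := by
  show (_ ≠ _ ∧ (2 ≤ _ ∨ _)) ↔ (u ≠ v ∧ (2 ≤ H.edist u v ∨ TrueTwins H u v))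
  rw [two_le_edist_iff, two_le_edist_iff]
  have hne : (Sum.inr u : Unit ⊕ β) ≠ Sum.inr v ↔ u ≠ v := by simp
  have htt : TrueTwins (joinK1 H) (Sum.inr u) (Sum.inr v) ↔ TrueTwins H u v := by
    constructor
    · intro h w
      simpa [joinK1_adj_inr_inr] using h (Sum.inr w)
    · intro h w
      rcases w with x | w
      · constructor <;> intro _ <;> exact Or.inl joinK1_adj_inl_inr.symm
      · simpa [joinK1_adj_inr_inr] using h w
  rw [hne, htt]
  constructor
  · rintro ⟨h1, ⟨h2, h3⟩ | h2⟩
    · exact ⟨h1, Or.inl ⟨h1, fun ha => h3 ha⟩⟩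
    · exact ⟨h1, Or.inr h2⟩
  · rintro ⟨h1, ⟨h2, h3⟩ | h2⟩
    · exact ⟨h1, Or.inl ⟨by simpa using h1, fun ha => h3 ha⟩⟩
    · exact ⟨h1, Or.inr h2⟩

lemma vcNum_gstar_joinK1 [Fintype β] [DecidableRel H.Adj] (hn' : 2 ≤ Fintype.card β)
    (hdeg : ∀ v, H.degree v ≤ Fintype.card β - 2) :
    vcNum (gstar (joinK1 H)) = vcNum (gstar H) := by
  classical
  apply le_antisymm
  · obtain ⟨S, hS, hc⟩ := exists_vc (gstar H)
    have hvc : IsVertexCover (gstar (joinK1 H)) (S.image Sum.inr) := by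
      rintro (x | u) (y | v) h
      · exact absurd h (gstar_joinK1_not_adj_inl hn' hdeg x _)
      · exact absurd h (gstar_joinK1_not_adj_inl hn' hdeg x _)
      · exact absurd h.symm (gstar_joinK1_not_adj_inl hn' hdeg y _)
      · rcases hS (gstar_joinK1_adj_inr.mp h) with h' | h'
        · exact Or.inl (Finset.mem_image_of_mem _ h')
        · exact Or.inr (Finset.mem_image_of_mem _ h')
    calc vcNum (gstar (joinK1 H)) ≤ (S.image Sum.inr).card := vcNum_le hvc
      _ = vcNum (gstar H) := by
          rw [Finset.card_image_of_injective _ Sum.inr_injective, hc]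
  · obtain ⟨S, hS, hc⟩ := exists_vc (gstar (joinK1 H))
    have hvc : IsVertexCover (gstar H) (S.preimage Sum.inr Sum.inr_injective.injOn) := by
      intro u v h
      rcases hS (gstar_joinK1_adj_inr.mpr h) with h' | h'
      · exact Or.inl (Finset.mem_preimage.mpr h')
      · exact Or.inr (Finset.mem_preimage.mpr h')
    calc vcNum (gstar H) ≤ (S.preimage Sum.inr Sum.inr_injective.injOn).card := vcNum_le hvc
      _ ≤ S.card := Finset.card_le_card_of_injOn Sum.inr
          (fun a ha => Finset.mem_preimage.mp ha) Sum.inr_injective.injOn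
      _ = vcNum (gstar (joinK1 H)) := hc

end Join

theorem stmt_18 [Fintype β] (n : ℕ) (hn : 2 ≤ n) (H : SimpleGraph β)
    [DecidableRel H.Adj] (hn' : 2 ≤ Fintype.card β)
    (hdeg : ∀ v, H.degree v ≤ Fintype.card β - 2) :
    Nonempty (srGraph (lexProd (⊤ : SimpleGraph (Fin n)) H) ≃g copies n (gstar H)) ∧
    (H.ediam = 2 → sdim (lexProd (⊤ : SimpleGraph (Fin n)) H) = n * sdim H) ∧
    (2 < H.ediam → sdim (lexProd (⊤ : SimpleGraph (Fin n)) H) = n * sdim (joinK1 H)) := by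
  have hne : Nonempty β := Fintype.card_pos_iff.mp (by omega)
  have h2G := lexTop_edist_le_two (H := H) hn
  have hgs := gstar_lexTop hn hn' hdeg
  have hbd := boundary_lexTop (H := H) hn hn' hdeg
  have main : sdim (lexProd (⊤ : SimpleGraph (Fin n)) H) = n * vcNum (gstar H) := by
    rw [sdim_eq_vcNum_gstar h2G, hgs, vcNum_copies]
  refine ⟨⟨⟨Equiv.subtypeUnivEquiv hbd, ?_⟩⟩, ?_, ?_⟩
  · intro a b
    show (copies n (gstar H)).Adj a.1 b.1 ↔ _
    rw [← hgs]
    show (gstar (lexProd (⊤ : SimpleGraph (Fin n)) H)).Adj a.1 b.1 ↔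
      (a.1 ≠ b.1 ∧ MMD (lexProd (⊤ : SimpleGraph (Fin n)) H) a.1 b.1)
    constructor
    · intro h
      exact ⟨h.1, (mmd_iff_gstar_adj h2G h.1).mpr h⟩
    · rintro ⟨hab, h⟩
      exact (mmd_iff_gstar_adj h2G hab).mp h
  · intro hdiam
    have h2H : ∀ u v : β, u ≠ v → H.edist u v ≤ 2 := fun u v _ =>
      hdiam ▸ SimpleGraph.edist_le_ediam
    rw [main, sdim_eq_vcNum_gstar h2H]
  · intro _
    rw [main, sdim_eq_vcNum_gstar joinK1_edist_le_two, vcNum_gstar_joinK1 hn' hdeg]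

end Paper
end
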